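/- Let W be the group of 3×3 signed permutation matrices (the Weyl group of type B₃, of order 48) acting on (ZMod 4)³ by matrix-vector multiplication. Then there are no free orbits: every vector v ∈ (ZMod 4)³ is fixed by some non-identity element of W. -/
import Mathlib


def IsSignedPerm3 (M : Matrix (Fin 3) (Fin 3) (ZMod 4)) : Prop :=
  ∃ (σ : Equiv.Perm (Fin 3)) (ε : Fin 3 → ZMod 4),
    (∀ i, ε i = 1 ∨ ε i = -1) ∧ ∀ i j, M i j = if j = σ i then ε i else 0

private lemma mulVec_signed (σ : Equiv.Perm (Fin 3)) (ε : Fin 3 → ZMod 4)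
    (v : Fin 3 → ZMod 4) :
    (Matrix.of fun i j => if j = σ i then ε i else 0).mulVec v
      = fun i => ε i * v (σ i) := by
  funext i
  simp [Matrix.mulVec, dotProduct, ite_mul, zero_mul]

theorem no_free_orbits_B3_mod4 (v : Fin 3 → ZMod 4) :
    ∃ M : Matrix (Fin 3) (Fin 3) (ZMod 4),
      IsSignedPerm3 M ∧ M ≠ 1 ∧ M.mulVec v = v := by
  have hz : ∀ x : ZMod 4, x = 0 ∨ x = 1 ∨ x = 2 ∨ x = 3 := by decide
  by_cases h : ∃ i, v i = 0 ∨ v i = 2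
  · obtain ⟨i, hi⟩ := h
    refine ⟨Matrix.of fun a b =>
        if b = (Equiv.refl (Fin 3)) a then (if a = i then (-1 : ZMod 4) else 1) else 0,
      ⟨Equiv.refl _, fun a => if a = i then -1 else 1, ?_, fun a b => rfl⟩, ?_, ?_⟩
    · intro a; by_cases ha : a = i <;> simp [ha]
    · intro hM
      have := congrFun (congrFun hM i) i
      simp [Matrix.one_apply] at this
      exact absurd this (by decide)
    · rw [mulVec_signed]
      funext a
      by_cases ha : a = i
      · subst ha
        simp only [Equiv.refl_apply, if_pos rfl]
        rcases hi with h0 | h0 <;> rw [h0] <;> decide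
      · simp [ha]
  · push_neg at h
    set c : ZMod 4 := if v 0 = v 1 then 1 else -1 with hc
    refine ⟨Matrix.of fun a b =>
        if b = (Equiv.swap 0 1) a then (if a = (2 : Fin 3) then (1 : ZMod 4) else c) else 0,
      ⟨Equiv.swap 0 1, fun a => if a = (2 : Fin 3) then 1 else c, ?_, fun a b => rfl⟩, ?_, ?_⟩
    · intro a
      by_cases ha : a = 2 <;> simp [ha, hc]
      by_cases h01 : v 0 = v 1 <;> simp [h01]
    · intro hM
      have := congrFun (congrFun hM 0) 0
      simp [Matrix.one_apply, Equiv.swap_apply_left] at this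
      exact absurd this (by decide)
    · rw [mulVec_signed]
      have h0 := h 0; have h1 := h 1
      have key : c * v 1 = v 0 ∧ c * v 0 = v 1 := by
        rcases hz (v 0) with e0 | e0 | e0 | e0 <;>
          rcases hz (v 1) with e1 | e1 | e1 | e1 <;>
          simp_all [hc] <;> decide
      funext a
      fin_cases a
      · simpa [Equiv.swap_apply_left] using key.1
      · simpa [Equiv.swap_apply_right] using key.2
      · simp [Equiv.swap_apply_of_ne_of_ne (by decide : (2:Fin 3) ≠ 0) (by decide : (2:Fin 3) ≠ 1)]
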